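/- Let R be a finite ring (not necessarily commutative and not necessarily with a multiplicative identity). Then the following are equivalent: (i) for all r, s ∈ R with r ≠ 0 and s ≠ 0, there exist n ≥ 1 and coefficients a₁, …, aₙ ∈ R such that a₁r + a₂r² + … + aₙrⁿ = s; (ii) R is a finite field, i.e., there exists e ∈ R which is a two-sided multiplicative identity, multiplication on R is commutative, and every nonzero element of R has a multiplicative inverse. -/
import Mathlib

def nupow {R : Type*} [NonUnitalRing R] (r : R) : ℕ → R
  | 0 => r
  | k + 1 => nupow r k * r

namespace NupowAux

variable {R : Type*} [NonUnitalRing R]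

lemma nupow_mul_nupow (r : R) (i j : ℕ) :
    nupow r i * nupow r j = nupow r (i + j + 1) := by
  induction j with
  | zero => rfl
  | succ k ih =>
    show nupow r i * (nupow r k * r) = _
    rw [← mul_assoc, ih]
    show nupow r (i + k + 1) * r = _
    have : i + (k+1) + 1 = (i + k + 1) + 1 := by omega
    rw [this]
    rfl

lemma mul_nupow_comm (r : R) (k : ℕ) : r * nupow r k = nupow r k * r := by
  induction k with
  | zero => rfl
  | succ k ih =>
    show r * (nupow r k * r) = _
    rw [← mul_assoc, ih]
    rfl

lemma nupow_eq_zero_of_le (r : R) {i j : ℕ} (hij : i ≤ j) (h : nupow r i = 0) :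
    nupow r j = 0 := by
  obtain ⟨c, rfl⟩ := Nat.exists_eq_add_of_le hij
  induction c with
  | zero => exact h
  | succ k ih =>
    have he : i + (k+1) = (i + k) + 1 := by omega
    rw [he]
    show nupow r (i + k) * r = 0
    rw [ih (by omega), zero_mul]

/-- In a finite ring, some `nupow r t` is idempotent. -/
lemma exists_idem [Finite R] (r : R) :
    ∃ t : ℕ, nupow r t * nupow r t = nupow r t := by
  obtain ⟨i', j', hne, heq⟩ := Finite.exists_ne_map_eq_of_infinite (fun n : ℕ => nupow r n)
  obtain ⟨i, j, hij, hpow⟩ : ∃ i j : ℕ, i < j ∧ nupow r i = nupow r j := by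
    rcases lt_or_gt_of_ne hne with h | h
    · exact ⟨i', j', h, heq⟩
    · exact ⟨j', i', h, heq.symm⟩
  set d := j - i with hd
  have hd1 : 1 ≤ d := by omega
  have per : ∀ c : ℕ, nupow r (i + c + d) = nupow r (i + c) := by
    intro c
    induction c with
    | zero =>
      have : i + 0 + d = j := by omega
      rw [this]; simpa using hpow.symm
    | succ k ih =>
      have h1 : i + (k+1) + d = (i + k + d) + 1 := by omega
      have h2 : i + (k+1) = (i + k) + 1 := by omega
      rw [h1, h2]
      show nupow r (i + k + d) * r = nupow r (i + k) * r
      rw [ih]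
  have mult : ∀ c : ℕ, ∀ m : ℕ, i ≤ m → nupow r (m + c * d) = nupow r m := by
    intro c
    induction c with
    | zero => intro m _; simp
    | succ k ih =>
      intro m hm
      have hkd : (k+1) * d = k * d + d := by ring
      have h1 : m + (k+1) * d = (i + (m + k*d - i)) + d := by omega
      rw [h1, per]
      have h2 : i + (m + k*d - i) = m + k * d := by omega
      rw [h2, ih m hm]
  refine ⟨(i+1) * d - 1, ?_⟩
  rw [nupow_mul_nupow]
  have hone : 1 ≤ (i+1) * d := by nlinarith
  have h3 : (i+1)*d - 1 + ((i+1)*d - 1) + 1 = ((i+1)*d - 1) + (i+1) * d := by omega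
  rw [h3, mult (i+1) _ (by nlinarith)]

end NupowAux

open NupowAux in
theorem stmt_0 {R : Type*} [NonUnitalRing R] [Finite R] [Nontrivial R] :
    (∀ r s : R, r ≠ 0 → s ≠ 0 →
      ∃ n : ℕ, 1 ≤ n ∧ ∃ a : ℕ → R,
        (∑ i ∈ Finset.range n, a (i + 1) * nupow r i) = s) ↔
    (∃ e : R, (∀ x : R, e * x = x ∧ x * e = x) ∧
      (∀ x y : R, x * y = y * x) ∧
      (∀ x : R, x ≠ 0 → ∃ y : R, x * y = e)) := by
  constructor
  · intro h
    -- Step 1: no nonzero square-zero elements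
    have hsq : ∀ x : R, x ≠ 0 → x * x ≠ 0 := by
      intro x hx hxx
      have hz : ∀ i, nupow x (i+1) = 0 := fun i =>
        nupow_eq_zero_of_le x (by omega : 1 ≤ i + 1) hxx
      have key : ∀ s : R, s ≠ 0 → ∃ a : R, s = a * x := by
        intro s hs
        obtain ⟨n, hn, a, ha⟩ := h x s hx hs
        refine ⟨a 1, ?_⟩
        rw [← ha, Finset.sum_eq_single 0]
        · rfl
        · intro i hi hi0
          obtain ⟨k, rfl⟩ : ∃ k, i = k + 1 := ⟨i - 1, by omega⟩
          rw [hz k, mul_zero]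
        · intro hn0
          exact absurd (Finset.mem_range.mpr (by omega)) hn0
      obtain ⟨a, ha⟩ := key x hx
      have ha0 : a ≠ 0 := by
        rintro rfl; rw [zero_mul] at ha; exact hx ha
      obtain ⟨b, hb⟩ := key a ha0
      apply hx
      rw [ha, hb, mul_assoc, hxx, mul_zero]
    -- Step 2: powers of nonzero elements are nonzero
    have hpow_ne : ∀ r : R, r ≠ 0 → ∀ i, nupow r i ≠ 0 := by
      intro r hr i
      induction i using Nat.strong_induction_on with
      | _ i ih =>
        match i, ih with
        | 0, _ => exact hr
        | (m+1), ih =>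
          intro h0
          have hm : nupow r m ≠ 0 := ih m (by omega)
          apply hsq _ hm
          rw [nupow_mul_nupow]
          exact nupow_eq_zero_of_le r (by omega) h0
    -- Step 3: idempotents are central
    have hred : ∀ z : R, z * z = 0 → z = 0 := by
      intro z hz
      by_contra hz0
      exact hsq z hz0 hz
    have central : ∀ f : R, f * f = f → ∀ x : R, f * x = x * f := by
      intro f hf x
      have h1 : f * x = f * x * f := by
        have hzf : (f * x - f * x * f) * f = 0 := by
          rw [sub_mul, mul_assoc (f*x) f f, hf, sub_self]
        have h2 : (f * x - f * x * f) * (f * x) = 0 := by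
          rw [← mul_assoc, hzf, zero_mul]
        have h3 : (f * x - f * x * f) * (f * x - f * x * f) = 0 := by
          rw [mul_sub, h2, ← mul_assoc (f*x-f*x*f) (f*x) f, h2, zero_mul, sub_self]
        exact sub_eq_zero.mp (hred _ h3)
      have h2 : x * f = f * x * f := by
        have hfw : f * (x * f - f * x * f) = 0 := by
          have ha : f * (f * x * f) = f * x * f := by
            rw [← mul_assoc f (f*x) f, ← mul_assoc f f x, hf]
          rw [mul_sub, ← mul_assoc f x f, ha, sub_self]
        have hww : (x * f - f * x * f) * (x * f - f * x * f) = 0 := by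
          rw [sub_mul, mul_assoc x f _, hfw, mul_zero,
            mul_assoc (f*x) f _, hfw, mul_zero, sub_self]
        exact sub_eq_zero.mp (hred _ hww)
      rw [h1, h2]
    -- Step 4: nonzero idempotents are two-sided identities
    have ident : ∀ f : R, f ≠ 0 → f * f = f → ∀ s : R, f * s = s ∧ s * f = s := by
      intro f hf0 hf s
      rcases eq_or_ne s 0 with rfl | hs
      · simp
      obtain ⟨n, hn, a, ha⟩ := h f s hf0 hs
      have hnp : ∀ i, nupow f i = f := by
        intro i
        induction i with
        | zero => rfl
        | succ k ih => show nupow f k * f = f; rw [ih, hf]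
      have hsum : s = (∑ i ∈ Finset.range n, a (i+1)) * f := by
        rw [← ha, Finset.sum_mul]
        exact Finset.sum_congr rfl fun i _ => by rw [hnp]
      have hsf : s * f = s := by
        conv_lhs => rw [hsum]
        rw [mul_assoc, hf, ← hsum]
      exact ⟨(central f hf s).trans hsf, hsf⟩
    -- Step 5: the identity element and inverses
    obtain ⟨r0, hr0⟩ := exists_ne (0 : R)
    obtain ⟨t0, ht0⟩ := exists_idem r0
    set e := nupow r0 t0 with he
    have he0 : e ≠ 0 := hpow_ne r0 hr0 t0
    have hide : ∀ s : R, e * s = s ∧ s * e = s := ident e he0 ht0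
    have hinv : ∀ x : R, x ≠ 0 → ∃ y : R, x * y = e ∧ y * x = e := by
      intro x hx
      obtain ⟨t, ht⟩ := exists_idem x
      have hft0 : nupow x t ≠ 0 := hpow_ne x hx t
      have hfe : nupow x t = e := by
        have h1 : e * nupow x t = nupow x t := (hide (nupow x t)).1
        have h2 : nupow x t * e = e := (ident (nupow x t) hft0 ht e).1
        rw [← h1, ← central (nupow x t) ht e, h2]
      cases t with
      | zero =>
        have hxe : x = e := hfe
        exact ⟨e, by rw [hxe]; exact (hide e).1, by rw [hxe]; exact (hide e).1⟩
      | succ k =>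
        refine ⟨nupow x k, ?_, ?_⟩
        · rw [mul_nupow_comm]; exact hfe
        · exact hfe
    -- Step 6: build a ring structure and invoke Wedderburn
    letI ring : Ring R :=
      { ‹NonUnitalRing R› with
        one := e
        one_mul := fun x => (hide x).1
        mul_one := fun x => (hide x).2 }
    haveI : NoZeroDivisors R := ⟨by
      intro x y hxy
      by_contra hc
      push_neg at hc
      obtain ⟨hx, hy⟩ := hc
      obtain ⟨x', _, hx2⟩ := hinv x hx
      apply hy
      calc y = e * y := ((hide y).1).symm
        _ = (x' * x) * y := by rw [hx2]
        _ = x' * (x * y) := mul_assoc _ _ _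
        _ = 0 := by rw [hxy, mul_zero]⟩
    haveI : IsDomain R := NoZeroDivisors.to_isDomain R
    have hfield := Finite.isDomain_to_isField R
    refine ⟨e, hide, hfield.mul_comm, fun x hx => ?_⟩
    obtain ⟨y, hy, _⟩ := hinv x hx
    exact ⟨y, hy⟩
  · rintro ⟨e, hid, hcomm, hinv⟩ r s hr hs
    obtain ⟨y, hy⟩ := hinv r hr
    refine ⟨1, le_refl 1, fun _ => s * y, ?_⟩
    simp only [Finset.sum_range_one]
    show s * y * nupow r 0 = s
    show s * y * r = s
    rw [mul_assoc, hcomm y r, hy, (hid s).2]
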